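/- Liouville's formula for QDEs: let I = [a,b], let A : ℝ → M₂(ℍ) be continuous on I with entries a_{ij}(t), let x₁, x₂ be solutions of x' = A(t)x on I, let M(t) be the 2×2 matrix with columns x₁(t), x₂(t), and let W(t) = ddet M(t). Then for every t₀, t ∈ I, W(t) = exp(∫_{t₀}^{t} 2·Re(a₁₁(s) + a₂₂(s)) ds) · W(t₀), where the exponential is the real exponential and 2·Re(tr A(s)) = tr A(s) + tr A⁺(s). In particular, if W(t₀) = 0 for some t₀ ∈ I then W(t) = 0 for all t ∈ I. -/

import Mathlib

open Matrix

noncomputable def starCLM : Quaternion ℝ →L[ℝ] Quaternion ℝ :=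
  { toFun := star,
    map_add' := star_add,
    map_smul' := fun r q => by simp [Quaternion.star_smul],
    cont := continuous_star }

lemma hasDerivAt_star {f : ℝ → Quaternion ℝ} {f' : Quaternion ℝ} {x : ℝ}
    (h : HasDerivAt f f' x) : HasDerivAt (fun t => star (f t)) (star f') x :=
  (starCLM.hasFDerivAt.comp_hasDerivAt x h :)

set_option maxHeartbeats 1000000 in
lemma quat_key (α β γ δ u : Quaternion ℝ) (p q : ℝ) :
    (α*(p:Quaternion ℝ) + β*star u + (p:Quaternion ℝ)*star α + u*star β)*(q:Quaternion ℝ)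
      + (p:Quaternion ℝ)*(γ*u + δ*(q:Quaternion ℝ) + star u*star γ + (q:Quaternion ℝ)*star δ)
      - ((α*u + β*(q:Quaternion ℝ) + (p:Quaternion ℝ)*star γ + u*star δ)*star u
         + u*(γ*(p:Quaternion ℝ) + δ*star u + star u*star α + (q:Quaternion ℝ)*star β))
    = ((2*(α.re + δ.re) : ℝ) : Quaternion ℝ) * ((p:Quaternion ℝ)*(q:Quaternion ℝ) - u*star u) := by
  ext <;>
    simp only [Quaternion.re_mul, Quaternion.imI_mul, Quaternion.imJ_mul, Quaternion.imK_mul,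
      Quaternion.re_add, Quaternion.imI_add, Quaternion.imJ_add, Quaternion.imK_add,
      Quaternion.re_sub, Quaternion.imI_sub, Quaternion.imJ_sub, Quaternion.imK_sub,
      Quaternion.re_star, Quaternion.imI_star, Quaternion.imJ_star, Quaternion.imK_star,
      Quaternion.re_coe, Quaternion.imI_coe, Quaternion.imJ_coe, Quaternion.imK_coe] <;>
    ring

/-- The double determinant of a 2×2 quaternion matrix. -/
noncomputable def ddet (M : Matrix (Fin 2) (Fin 2) (Quaternion ℝ)) : Quaternion ℝ :=
  (M * Mᴴ) 0 0 * (M * Mᴴ) 1 1 - (M * Mᴴ) 0 1 * (M * Mᴴ) 1 0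

set_option maxHeartbeats 1600000 in
/-- Liouville's formula for quaternionic differential equations:
`W(t) = exp (∫_{t₀}^t 2 Re(tr A(s)) ds) * W(t₀)`; in particular, if the Wronskian
vanishes at one point of `I = [a,b]` then it vanishes identically on `I`. -/
theorem qde_liouville (a b : ℝ)
    (A : ℝ → Matrix (Fin 2) (Fin 2) (Quaternion ℝ))
    (hA : ContinuousOn A (Set.Icc a b))
    (x₁ x₂ : ℝ → Fin 2 → Quaternion ℝ)
    (hx₁ : ∀ t ∈ Set.Icc a b, HasDerivAt x₁ ((A t).mulVec (x₁ t)) t)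
    (hx₂ : ∀ t ∈ Set.Icc a b, HasDerivAt x₂ ((A t).mulVec (x₂ t)) t)
    (W : ℝ → Quaternion ℝ)
    (hW : ∀ t, W t = ddet (Matrix.of fun i j => ![x₁ t, x₂ t] j i)) :
    (∀ t₀ ∈ Set.Icc a b, ∀ t ∈ Set.Icc a b,
      W t = ((Real.exp (∫ s in t₀..t, 2 * ((A s 0 0).re + (A s 1 1).re)) : ℝ) : Quaternion ℝ)
        * W t₀) ∧
    (∀ t₀ ∈ Set.Icc a b, W t₀ = 0 → ∀ t ∈ Set.Icc a b, W t = 0) := by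
  -- abbreviations for the matrix entries of M(t)
  set m00 : ℝ → Quaternion ℝ := fun u => x₁ u 0 with hm00
  set m10 : ℝ → Quaternion ℝ := fun u => x₁ u 1 with hm10
  set m01 : ℝ → Quaternion ℝ := fun u => x₂ u 0 with hm01
  set m11 : ℝ → Quaternion ℝ := fun u => x₂ u 1 with hm11
  set n00 : ℝ → Quaternion ℝ := fun u => m00 u * star (m00 u) + m01 u * star (m01 u) with hn00def
  set n01 : ℝ → Quaternion ℝ := fun u => m00 u * star (m10 u) + m01 u * star (m11 u) with hn01def
  set n10 : ℝ → Quaternion ℝ := fun u => m10 u * star (m00 u) + m11 u * star (m01 u) with hn10def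
  set n11 : ℝ → Quaternion ℝ := fun u => m10 u * star (m10 u) + m11 u * star (m11 u) with hn11def
  have hWfun : W = fun u => n00 u * n11 u - n01 u * n10 u := by
    funext u
    rw [hW u]
    simp [ddet, Matrix.mul_apply, Fin.sum_univ_two, Matrix.conjTranspose_apply, hn00def,
      hn01def, hn10def, hn11def, hm00, hm01, hm10, hm11]
  set f : ℝ → ℝ := fun s => 2 * ((A s 0 0).re + (A s 1 1).re) with hfdef
  -- the Wronskian satisfies W' = f • W on Icc a b
  have hWd : ∀ τ ∈ Set.Icc a b, HasDerivAt W ((f τ : Quaternion ℝ) * W τ) τ := by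
    intro τ hτ
    have hd1 : ∀ i, HasDerivAt (fun u => x₁ u i) (((A τ).mulVec (x₁ τ)) i) τ := fun i =>
      (ContinuousLinearMap.proj (R := ℝ) (φ := fun _ : Fin 2 => Quaternion ℝ) i
        ).hasFDerivAt.comp_hasDerivAt τ (hx₁ τ hτ)
    have hd2 : ∀ i, HasDerivAt (fun u => x₂ u i) (((A τ).mulVec (x₂ τ)) i) τ := fun i =>
      (ContinuousLinearMap.proj (R := ℝ) (φ := fun _ : Fin 2 => Quaternion ℝ) i
        ).hasFDerivAt.comp_hasDerivAt τ (hx₂ τ hτ)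
    have hd00 : HasDerivAt m00 (A τ 0 0 * m00 τ + A τ 0 1 * m10 τ) τ := by
      have := hd1 0; simpa [Matrix.mulVec, dotProduct, Fin.sum_univ_two] using this
    have hd10 : HasDerivAt m10 (A τ 1 0 * m00 τ + A τ 1 1 * m10 τ) τ := by
      have := hd1 1; simpa [Matrix.mulVec, dotProduct, Fin.sum_univ_two] using this
    have hd01 : HasDerivAt m01 (A τ 0 0 * m01 τ + A τ 0 1 * m11 τ) τ := by
      have := hd2 0; simpa [Matrix.mulVec, dotProduct, Fin.sum_univ_two] using this
    have hd11 : HasDerivAt m11 (A τ 1 0 * m01 τ + A τ 1 1 * m11 τ) τ := by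
      have := hd2 1; simpa [Matrix.mulVec, dotProduct, Fin.sum_univ_two] using this
    have hn00 : HasDerivAt n00
        (A τ 0 0 * n00 τ + A τ 0 1 * n10 τ + n00 τ * star (A τ 0 0) + n01 τ * star (A τ 0 1)) τ := by
      have h := (hd00.mul (hasDerivAt_star hd00)).add (hd01.mul (hasDerivAt_star hd01))
      refine h.congr_deriv ?_
      simp only [star_add, StarMul.star_mul, star_star, hn00def, hn01def, hn10def]
      noncomm_ring
    have hn01 : HasDerivAt n01
        (A τ 0 0 * n01 τ + A τ 0 1 * n11 τ + n00 τ * star (A τ 1 0) + n01 τ * star (A τ 1 1)) τ := by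
      have h := (hd00.mul (hasDerivAt_star hd10)).add (hd01.mul (hasDerivAt_star hd11))
      refine h.congr_deriv ?_
      simp only [star_add, StarMul.star_mul, star_star, hn00def, hn01def, hn11def]
      noncomm_ring
    have hn10 : HasDerivAt n10
        (A τ 1 0 * n00 τ + A τ 1 1 * n10 τ + n10 τ * star (A τ 0 0) + n11 τ * star (A τ 0 1)) τ := by
      have h := (hd10.mul (hasDerivAt_star hd00)).add (hd11.mul (hasDerivAt_star hd01))
      refine h.congr_deriv ?_
      simp only [star_add, StarMul.star_mul, star_star, hn00def, hn10def, hn11def]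
      noncomm_ring
    have hn11 : HasDerivAt n11
        (A τ 1 0 * n01 τ + A τ 1 1 * n11 τ + n10 τ * star (A τ 1 0) + n11 τ * star (A τ 1 1)) τ := by
      have h := (hd10.mul (hasDerivAt_star hd10)).add (hd11.mul (hasDerivAt_star hd11))
      refine h.congr_deriv ?_
      simp only [star_add, StarMul.star_mul, star_star, hn01def, hn10def, hn11def]
      noncomm_ring
    have hraw := (hn00.mul hn11).sub (hn01.mul hn10)
    rw [hWfun]
    have hp : n00 τ = ((Quaternion.normSq (m00 τ) + Quaternion.normSq (m01 τ) : ℝ) : Quaternion ℝ) := by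
      simp [hn00def, Quaternion.self_mul_star, Quaternion.coe_add]
    have hq : n11 τ = ((Quaternion.normSq (m10 τ) + Quaternion.normSq (m11 τ) : ℝ) : Quaternion ℝ) := by
      simp [hn11def, Quaternion.self_mul_star, Quaternion.coe_add]
    have hsu : n10 τ = star (n01 τ) := by
      simp [hn01def, hn10def, star_add, StarMul.star_mul, star_star]
    have hval :
        (A τ 0 0 * n00 τ + A τ 0 1 * n10 τ + n00 τ * star (A τ 0 0) + n01 τ * star (A τ 0 1)) * n11 τ
          + n00 τ * (A τ 1 0 * n01 τ + A τ 1 1 * n11 τ + n10 τ * star (A τ 1 0) + n11 τ * star (A τ 1 1))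
          - ((A τ 0 0 * n01 τ + A τ 0 1 * n11 τ + n00 τ * star (A τ 1 0) + n01 τ * star (A τ 1 1)) * n10 τ
             + n01 τ * (A τ 1 0 * n00 τ + A τ 1 1 * n10 τ + n10 τ * star (A τ 0 0) + n11 τ * star (A τ 0 1)))
        = ((f τ : ℝ) : Quaternion ℝ) * (n00 τ * n11 τ - n01 τ * n10 τ) := by
      rw [hp, hq, hsu]
      exact quat_key (A τ 0 0) (A τ 0 1) (A τ 1 0) (A τ 1 1) (n01 τ) _ _
    exact hval ▸ hraw
  -- the integrating factor argument
  have key : ∀ t₀ ∈ Set.Icc a b, ∀ t ∈ Set.Icc a b,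
      W t = ((Real.exp (∫ s in t₀..t, 2 * ((A s 0 0).re + (A s 1 1).re)) : ℝ) : Quaternion ℝ)
        * W t₀ := by
    intro t₀ ht₀ t ht
    have hab : a ≤ b := le_trans ht₀.1 ht₀.2
    have hfc : ContinuousOn f (Set.Icc a b) := by
      rw [hfdef]
      intro s hs
      have h := hA s hs
      exact continuousWithinAt_const.mul
        ((((Quaternion.continuous_re.comp
              (continuous_id.matrix_elem 0 0)).continuousAt).comp_continuousWithinAt h).add
         (((Quaternion.continuous_re.comp
              (continuous_id.matrix_elem 1 1)).continuousAt).comp_continuousWithinAt h))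
    set fh : ℝ → ℝ := fun s => f ((Set.projIcc a b hab s : Set.Icc a b) : ℝ) with hfh
    have hfhc : Continuous fh := hfc.restrict.comp continuous_projIcc
    have hfheq : ∀ s ∈ Set.Icc a b, fh s = f s := by
      intro s hs; simp [hfh, Set.projIcc_of_mem hab hs]
    set g : ℝ → ℝ := fun u => ∫ s in t₀..u, fh s with hg
    have hgd : ∀ u, HasDerivAt g (fh u) u := by
      intro u
      exact intervalIntegral.integral_hasDerivAt_right
        (hfhc.intervalIntegrable _ _) (hfhc.stronglyMeasurableAtFilter _ _)
        hfhc.continuousAt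
    have hint : (∫ s in t₀..t, 2 * ((A s 0 0).re + (A s 1 1).re)) = g t := by
      rw [hg]
      refine intervalIntegral.integral_congr fun s hs => ?_
      have hs' : s ∈ Set.Icc a b := Set.uIcc_subset_Icc ht₀ ht hs
      rw [hfheq s hs', hfdef]
    set F : ℝ → Quaternion ℝ := fun u => Real.exp (-(g u)) • W u with hF
    have hFd : ∀ τ ∈ Set.Icc a b, HasDerivAt F 0 τ := by
      intro τ hτ
      have he : HasDerivAt (fun u => Real.exp (-(g u))) (Real.exp (-(g τ)) * (-(fh τ))) τ :=
        ((hgd τ).neg).exp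
      have h2 := he.smul (hWd τ hτ)
      refine h2.congr_deriv ?_
      rw [Quaternion.coe_mul_eq_smul, hfheq τ hτ, smul_smul]
      rw [show Real.exp (-g τ) * -f τ = -(Real.exp (-g τ) * f τ) by ring]
      module
    have hFconst : ∀ x ∈ Set.Icc a b, F x = F a := by
      intro x hx
      refine constant_of_has_deriv_right_zero
        (fun y hy => (hFd y hy).continuousAt.continuousWithinAt)
        (fun y hy => ((hFd y (Set.Ico_subset_Icc_self hy)).hasDerivWithinAt)) x hx
    have hFt : F t = F t₀ := by rw [hFconst t ht, hFconst t₀ ht₀]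
    have hg0 : g t₀ = 0 := intervalIntegral.integral_same
    have hWt : Real.exp (-(g t)) • W t = W t₀ := by
      have h3 := hFt
      simp only [hF] at h3
      rw [hg0] at h3
      simpa using h3
    rw [hint, ← hWt, Quaternion.coe_mul_eq_smul, smul_smul, ← Real.exp_add]
    simp
  exact ⟨key, fun t₀ ht₀ h0 t ht => by rw [key t₀ ht₀ t ht, h0, mul_zero]⟩
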